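/- arXiv:1304.5152 — 2 statements merged into one kernel-verified Lean document; each statement's English description precedes it below -/
import Mathlib

section
/- With I, J, H, H^P, E^W and the consistency relation T as defined: for all P, R ∈ I with P ≠ R, every k ∈ ℕ, and every W ∈ J with R ∈ W, there EXIST a, b ∈ H^P such that T(a, b, (k,R,W)) holds. (Consequently, in the complex algebra of the atom structure, H^P ; H^P ⊇ H^R for all R ≠ P, so the map P ↦ H^P embeds the finite relation algebra M into the complex algebra.) -/
/-- `e(i,j,k)`: the natural numbers `i`, `j`, `k` are *evenly distributed*: some
arrangement of `i, j, k` forms a three-term arithmetic progression. -/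
def EvenlyDistributed (i j k : ℕ) : Prop :=
  ∃ p q r : ℕ, ({p, q, r} : Set ℕ) = ({i, j, k} : Set ℕ) ∧ (r : ℤ) - q = (q : ℤ) - p

variable (α : Type*) [DecidableEq α]

/-- The atom structure `H = {(i,P,W) : i ∈ ℕ, P ∈ I, W ∈ J, P ∈ W}`, where `J` is the set
of 2-element subsets of `I = α`, obtained by blowing up each atom `P` of the finite
relation algebra `M` into infinitely many atoms. -/
def blurH : Set (ℕ × α × Finset α) :=
  {x | x.2.2.card = 2 ∧ x.2.1 ∈ x.2.2}

variable {α}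

/-- `H^P`: the atoms of `H` obtained by splitting the atom `P`. -/
def blurHP (P : α) : Set (ℕ × α × Finset α) :=
  {x ∈ blurH α | x.2.1 = P}

/-- `E^W`: the block of atoms of `H` carrying the blur `W`. -/
def blurEW (W : Finset α) : Set (ℕ × α × Finset α) :=
  {x ∈ blurH α | x.2.2 = W}

/-- The ternary consistency relation: `T((i,P,S),(j,Q,Z),(k,R,W))` holds iff
`S ∩ Z ∩ W = ∅`, or (`e(i,j,k)` and not `P = Q = R`). -/
def blurT (a b c : ℕ × α × Finset α) : Prop :=
  a.2.2 ∩ b.2.2 ∩ c.2.2 = ∅ ∨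
    (EvenlyDistributed a.1 b.1 c.1 ∧ ¬ (a.2.1 = b.2.1 ∧ b.2.1 = c.2.1))

/-- For distinct atoms `P ≠ R` of `I`, every atom `(k,R,W)` of `H^R` is a consistent
composition of two atoms of `H^P`: hence in the complex algebra `H^P ; H^P ⊇ H^R`, so
`P ↦ H^P` embeds the finite relation algebra `M` into the complex algebra. -/
theorem blurHP_comp_covers {α : Type*} [Fintype α] [DecidableEq α]
    (hcard : 6 ≤ Fintype.card α) (P R : α) (hPR : P ≠ R) (k : ℕ) (W : Finset α)
    (hW : W.card = 2) (hRW : R ∈ W) :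
    ∃ a ∈ blurHP P, ∃ b ∈ blurHP P, blurT a b (k, R, W) := by
  refine ⟨(k, P, {P, R}), ⟨⟨?_, ?_⟩, rfl⟩, (k, P, {P, R}), ⟨⟨?_, ?_⟩, rfl⟩, ?_⟩
  · simp [Finset.card_insert_of_notMem, hPR]
  · simp
  · simp [Finset.card_insert_of_notMem, hPR]
  · simp
  · exact Or.inr ⟨⟨k, k, k, rfl, by ring⟩, fun h => hPR h.2⟩
end

section
/- Let U be a non-principal ultrafilter on ℕ and let (G_i)_{i ∈ ℕ} be a family of simple graphs on vertex types V_i such that for every i, every cycle in G_i has length greater than i (the girth of G_i exceeds i). Define the ultraproduct graph G on the U-germs of Π i, V_i (functions identified when they agree on a set belonging to U), with germs [x], [y] adjacent if and only if {i : x i is adjacent to y i in G_i} ∈ U. Then G is a well-defined simple graph, G is acyclic, and hence G is 2-colourable. -/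
/-- Finite intersections in an ultrafilter, indexed by a list. -/
lemma UPG.list_mem {α β : Type*} (U : Ultrafilter β) (l : List α)
    (P : α → β → Prop) (h : ∀ a ∈ l, {i | P a i} ∈ U) : {i | ∀ a ∈ l, P a i} ∈ U := by
  induction l with
  | nil =>
    simp only [List.not_mem_nil, false_implies, implies_true, Set.setOf_true]
    exact Filter.univ_mem
  | cons a l ih =>
    have hmem := Filter.inter_mem (h a (by simp))
      (ih fun b hb => h b (List.mem_cons_of_mem _ hb))
    refine Filter.mem_of_superset hmem ?_
    rintro i ⟨h1, h2⟩ b hb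
    rcases List.mem_cons.mp hb with rfl | hb
    · exact h1
    · exact h2 b hb

/-- Pull back a walk along a map that sends all relevant darts to edges. -/
lemma UPG.walk_pull {W V' : Type*} {H : SimpleGraph W} {K : SimpleGraph V'} (f : W → V') :
    ∀ {a b : W} (p : H.Walk a b), (∀ d ∈ p.darts, K.Adj (f d.fst) (f d.snd)) →
      ∃ q : K.Walk (f a) (f b), q.length = p.length ∧ q.support = p.support.map f ∧
        q.edges = p.edges.map (Sym2.map f) := by
  intro a b p
  induction p with
  | nil => exact fun _ => ⟨SimpleGraph.Walk.nil, by simp, by simp, by simp⟩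
  | cons h p ih =>
    intro hd
    obtain ⟨q, hq1, hq2, hq3⟩ := ih fun d hdm => hd d
      (by rw [SimpleGraph.Walk.darts_cons]; exact List.mem_cons_of_mem _ hdm)
    have hadj := hd ⟨(_, _), h⟩
      (by rw [SimpleGraph.Walk.darts_cons]; exact List.mem_cons_self)
    exact ⟨SimpleGraph.Walk.cons hadj q, by simp [hq1], by simp [hq2], by simp [hq3]⟩

/-- `Sym2.map` is injective on pairs whose elements lie in a set on which `f` is injective. -/
lemma UPG.sym2_inj {α β : Type*} (f : α → β) (s : List α)
    (hf : ∀ x ∈ s, ∀ y ∈ s, f x = f y → x = y) :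
    ∀ e1 : Sym2 α, (∀ a ∈ e1, a ∈ s) → ∀ e2 : Sym2 α, (∀ a ∈ e2, a ∈ s) →
      Sym2.map f e1 = Sym2.map f e2 → e1 = e2 := by
  intro e1
  induction e1 using Sym2.ind with
  | _ a b =>
    intro h1 e2
    induction e2 using Sym2.ind with
    | _ c d =>
      intro h2 heq
      simp only [Sym2.map_pair_eq, Sym2.eq_iff] at heq ⊢
      have ha : a ∈ s := h1 a (by simp)
      have hb : b ∈ s := h1 b (by simp)
      have hc : c ∈ s := h2 c (by simp)
      have hd : d ∈ s := h2 d (by simp)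
      rcases heq with ⟨h3, h4⟩ | ⟨h3, h4⟩
      · exact Or.inl ⟨hf a ha c hc h3, hf b hb d hd h4⟩
      · exact Or.inr ⟨hf a ha d hd h3, hf b hb c hc h4⟩

/-- An acyclic graph is 2-colourable. -/
lemma UPG.isAcyclic_colorable_two {W : Type*} {H : SimpleGraph W} (h : H.IsAcyclic) :
    H.Colorable 2 := by
  classical
  have key : ∀ r u v : W, H.Reachable r u → H.Reachable r v → H.Adj u v →
      H.dist r u % 2 ≠ H.dist r v % 2 := by
    intro r u v hru hrv hadj
    have bound : ∀ a b : W, H.Reachable r a → H.Adj a b → H.dist r b ≤ H.dist r a + 1 := by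
      intro a b hra hab
      obtain ⟨p, hp, hlen⟩ := hra.exists_path_of_dist
      have := H.dist_le (p.concat hab)
      rwa [SimpleGraph.Walk.length_concat, hlen] at this
    have hne : H.dist r u ≠ H.dist r v := by
      intro heq
      obtain ⟨p, hp, hpl⟩ := hru.exists_path_of_dist
      obtain ⟨q, hq, hql⟩ := hrv.exists_path_of_dist
      have hv_notin : v ∉ p.support := by
        intro hv
        have h1 := SimpleGraph.Walk.length_takeUntil_le p hv
        have h2 : H.dist r v ≤ (p.takeUntil v hv).length := H.dist_le _
        have h3 := SimpleGraph.Walk.take_spec p hv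
        have h4 : (p.takeUntil v hv).length + (p.dropUntil v hv).length = p.length := by
          rw [← SimpleGraph.Walk.length_append, h3]
        have h5 : (p.dropUntil v hv).length = 0 := by omega
        exact (H.ne_of_adj hadj) (SimpleGraph.Walk.eq_of_length_eq_zero h5).symm
      have hp' : (p.concat hadj).IsPath := by
        apply SimpleGraph.Walk.IsPath.mk'
        rw [SimpleGraph.Walk.support_concat]
        simp [List.concat_eq_append, List.nodup_append, hp.support_nodup, hv_notin]
        intro a ha hav
        exact hv_notin (hav ▸ ha)
      have hpq := h.path_unique ⟨p.concat hadj, hp'⟩ ⟨q, hq⟩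
      have hl : (p.concat hadj).length = q.length := by
        have := congrArg (fun P : H.Path r v => (P : H.Walk r v).length) hpq
        simpa using this
      rw [SimpleGraph.Walk.length_concat, hpl, hql] at hl
      omega
    have b1 := bound u v hru hadj
    have b2 := bound v u hrv hadj.symm
    omega
  refine ⟨SimpleGraph.Coloring.mk
    (fun v => (⟨H.dist ((H.connectedComponentMk v).out) v % 2, Nat.mod_lt _ two_pos⟩ : Fin 2))
    ?_⟩
  intro u v hadj heq
  have hc : H.connectedComponentMk u = H.connectedComponentMk v :=
    SimpleGraph.ConnectedComponent.connectedComponentMk_eq_of_adj hadj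
  have hru : H.Reachable ((H.connectedComponentMk u).out) u :=
    SimpleGraph.ConnectedComponent.exact (Quot.out_eq _)
  have hrv : H.Reachable ((H.connectedComponentMk u).out) v := by
    rw [hc]
    exact SimpleGraph.ConnectedComponent.exact (Quot.out_eq _)
  apply key _ _ _ hru hrv hadj
  have := congrArg Fin.val heq
  simp only at this
  rw [hc] at this ⊢
  exact this

/-- The ultraproduct of a family of simple graphs `G i` on vertex types `V i` modulo an
ultrafilter `U`: its vertices are the `U`-germs of functions in `Π i, V i` (functions
identified when they agree on a set in `U`), and two germs are adjacent iff (for some —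
equivalently, any — representatives) the coordinates are adjacent `U`-almost everywhere. -/
def ultraproductGraph (U : Ultrafilter ℕ) (V : ℕ → Type*) (G : ∀ i, SimpleGraph (V i)) :
    SimpleGraph ((U : Filter ℕ).Product V) :=
  SimpleGraph.fromRel fun X Y =>
    ∃ x y : ∀ i, V i,
      Quotient.mk (Filter.productSetoid (U : Filter ℕ) V) x = X ∧
      Quotient.mk (Filter.productSetoid (U : Filter ℕ) V) y = Y ∧
      {i : ℕ | (G i).Adj (x i) (y i)} ∈ U

/-- If `U` is a non-principal ultrafilter on `ℕ` and each `G i` has girth exceeding `i`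
(every cycle in `G i` has length `> i`), then the ultraproduct graph is well defined
(adjacency of germs `[x]`, `[y]` holds iff `{i : x i ~ y i in G i} ∈ U`, independently of
representatives), is acyclic, and hence is 2-colourable. -/
theorem ultraproductGraph_acyclic_colorable_two (U : Ultrafilter ℕ)
    (hU : ∀ i : ℕ, (U : Filter ℕ) ≠ pure i)
    (V : ℕ → Type*) (G : ∀ i, SimpleGraph (V i))
    (hgirth : ∀ i : ℕ, (i : ℕ∞) < (G i).egirth) :
    (∀ x y : ∀ i, V i,
        (ultraproductGraph U V G).Adj
            (Quotient.mk (Filter.productSetoid (U : Filter ℕ) V) x)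
            (Quotient.mk (Filter.productSetoid (U : Filter ℕ) V) y) ↔
          {i : ℕ | (G i).Adj (x i) (y i)} ∈ U) ∧
      (ultraproductGraph U V G).IsAcyclic ∧
      (ultraproductGraph U V G).Colorable 2 := by
  classical
  have part1 : ∀ x y : ∀ i, V i,
      (ultraproductGraph U V G).Adj
          (Quotient.mk (Filter.productSetoid (U : Filter ℕ) V) x)
          (Quotient.mk (Filter.productSetoid (U : Filter ℕ) V) y) ↔
        {i : ℕ | (G i).Adj (x i) (y i)} ∈ U := by
    intro x y
    constructor
    · intro h
      replace h := (SimpleGraph.fromRel_adj ..).mp h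
      obtain ⟨hne, h | h⟩ := h
      · obtain ⟨x', y', hx', hy', hxy⟩ := h
        have ex : {i | x' i = x i} ∈ (U : Filter ℕ) := Quotient.exact hx'
        have ey : {i | y' i = y i} ∈ (U : Filter ℕ) := Quotient.exact hy'
        refine Filter.mem_of_superset
          (Filter.inter_mem (Filter.inter_mem hxy ex) ey) ?_
        rintro i ⟨⟨ha, hx⟩, hy⟩
        simp only [Set.mem_setOf_eq] at *
        rw [← hx, ← hy]
        exact ha
      · obtain ⟨x', y', hx', hy', hxy⟩ := h
        have ex : {i | x' i = y i} ∈ (U : Filter ℕ) := Quotient.exact hx'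
        have ey : {i | y' i = x i} ∈ (U : Filter ℕ) := Quotient.exact hy'
        refine Filter.mem_of_superset
          (Filter.inter_mem (Filter.inter_mem hxy ex) ey) ?_
        rintro i ⟨⟨ha, hx⟩, hy⟩
        simp only [Set.mem_setOf_eq] at *
        rw [← hx, ← hy]
        exact ha.symm
    · intro h
      apply (SimpleGraph.fromRel_adj ..).mpr
      refine ⟨?_, Or.inl ⟨x, y, rfl, rfl, h⟩⟩
      intro heq
      have ex : {i | x i = y i} ∈ (U : Filter ℕ) := Quotient.exact heq
      obtain ⟨i, hi1, hi2⟩ := Filter.nonempty_of_mem (Filter.inter_mem h ex)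
      exact (G i).ne_of_adj hi1 hi2
  have hcof : (U : Filter ℕ) ≤ Filter.cofinite := by
    rcases Ultrafilter.le_cofinite_or_eq_pure U with h | ⟨a, ha⟩
    · exact h
    · exact absurd (by rw [ha, Ultrafilter.coe_pure]) (hU a)
  have hacyc : (ultraproductGraph U V G).IsAcyclic := by
    intro X p hp
    -- almost-everywhere adjacency of consecutive representatives
    have S1 : {i : ℕ | ∀ d ∈ p.darts, (G i).Adj (d.fst.out i) (d.snd.out i)} ∈ U := by
      refine UPG.list_mem U p.darts _ ?_
      intro d _
      refine (part1 d.fst.out d.snd.out).mp ?_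
      exact (congrArg₂ (ultraproductGraph U V G).Adj (Quotient.out_eq d.fst)
        (Quotient.out_eq d.snd)).mpr d.adj
    -- almost-everywhere distinctness of representatives of distinct vertices
    have S2 : {i : ℕ | ∀ u ∈ p.support, ∀ v ∈ p.support, u ≠ v → u.out i ≠ v.out i} ∈ U := by
      refine UPG.list_mem U p.support _ ?_
      intro u _
      refine UPG.list_mem U p.support _ ?_
      intro v _
      by_cases huv : u = v
      · refine Filter.mem_of_superset Filter.univ_mem ?_
        intro i _ hne
        exact absurd huv hne
      · have hmem : {i : ℕ | u.out i ≠ v.out i} ∈ U := by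
          by_contra hnot
          have hcompl := (Ultrafilter.compl_mem_iff_notMem (f := U)).mpr hnot
          have heqm : {i : ℕ | u.out i = v.out i} ∈ (U : Filter ℕ) := by
            refine Filter.mem_of_superset hcompl ?_
            intro i hi
            simpa using hi
          apply huv
          rw [← Quotient.out_eq u, ← Quotient.out_eq v]
          exact Quotient.sound heqm
        exact Filter.mem_of_superset hmem fun i hi _ => hi
    have S3 : {i : ℕ | p.length ≤ i} ∈ U := by
      apply hcof
      rw [Filter.mem_cofinite]
      refine Set.Finite.subset (Set.finite_lt_nat p.length) ?_
      intro i hi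
      simpa using hi
    obtain ⟨i, hi⟩ := Filter.nonempty_of_mem
      (Filter.inter_mem (Filter.inter_mem S1 S2) S3)
    obtain ⟨⟨hi1, hi2⟩, hi3⟩ := hi
    obtain ⟨q, hql, hqs, hqe⟩ := UPG.walk_pull (K := G i) (fun u => u.out i) p (fun d hd => hi1 d hd)
    have hinj : ∀ u ∈ p.support, ∀ v ∈ p.support, u.out i = v.out i → u = v :=
      fun u hu v hv hEq => by_contra fun hne => hi2 u hu v hv hne hEq
    have hedge_mem : ∀ e ∈ p.edges, ∀ a ∈ e, a ∈ p.support := by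
      intro e
      induction e using Sym2.ind with
      | _ t u =>
        intro he a ha
        rw [Sym2.mem_iff] at ha
        rcases ha with rfl | rfl
        · exact p.fst_mem_support_of_mem_edges he
        · exact p.snd_mem_support_of_mem_edges he
    have hcyc : q.IsCycle := by
      refine ⟨⟨⟨?_⟩, ?_⟩, ?_⟩
      · rw [hqe]
        refine List.Nodup.map_on ?_ hp.isCircuit.isTrail.edges_nodup
        intro e1 he1 e2 he2 heq
        exact UPG.sym2_inj _ p.support hinj e1 (hedge_mem e1 he1) e2 (hedge_mem e2 he2) heq
      · intro hnil
        have h3 := hp.three_le_length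
        rw [hnil] at hql
        simp only [SimpleGraph.Walk.length_nil] at hql
        omega
      · rw [hqs, SimpleGraph.Walk.support_eq_cons p, List.map_cons, List.tail_cons]
        refine List.Nodup.map_on ?_ ?_
        · intro a ha b hb hab
          exact hinj a (List.mem_of_mem_tail ha) b (List.mem_of_mem_tail hb) hab
        · have := hp.support_nodup
          rwa [SimpleGraph.Walk.support_eq_cons p, List.tail_cons] at this
    have h1 : (G i).egirth ≤ (q.length : ℕ∞) := by
      rw [SimpleGraph.egirth]
      exact (iInf_le _ _).trans ((iInf_le _ q).trans (iInf_le _ hcyc))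
    have h2 : (i : ℕ∞) < (q.length : ℕ∞) := (hgirth i).trans_le h1
    rw [hql] at h2
    exact absurd h2 (not_lt.mpr (by exact_mod_cast hi3))
  exact ⟨part1, hacyc, UPG.isAcyclic_colorable_two hacyc⟩
end
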